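/- Quadratic programming on the simplex, exact solution: let μ_1 ≤ ⋯ ≤ μ_K and κ_1,…,κ_K ∈ ℝ (no positivity assumption on κ_i − μ_i²). Then max over λ ∈ Δ^K of (λᵀκ − (λᵀμ)²) equals max{ max_{1≤i≤K} (κ_i − μ_i²), max_{1≤i<j≤K} h_{ij}(μ_{ij}) }, with h_{ij}(x) = x² − 2μ_i x + κ_i and μ_{ij} = (μ_i ∨ (κ_j − κ_i)/(2(μ_j − μ_i))) ∧ μ_j if μ_i < μ_j, μ_{ij} = μ_i otherwise. -/

import Mathlib

open Finset Set Filter Topology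

private lemma uv_sum_single {K : ℕ} (i : Fin K) (v : Fin K → ℝ) :
    ∑ k, (if k = i then (1:ℝ) else 0) * v k = v i := by
  simp [ite_mul]

private lemma uv_sum_pair {K : ℕ} {i j : Fin K} (hij : i ≠ j) (t : ℝ) (v : Fin K → ℝ) :
    ∑ k, ((if k = i then t else 0) + (if k = j then 1 - t else 0)) * v k
      = t * v i + (1 - t) * v j := by
  simp [add_mul, ite_mul, Finset.sum_add_distrib]

private lemma uv_key {K : ℕ} (hK : 2 ≤ K) (μ κ : Fin K → ℝ) (hmono : Monotone μ) (R : ℝ)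
    (hA : ∀ i, κ i - μ i ^ 2 ≤ R)
    (hB : ∀ i j : Fin K, i < j → μ i < μ j → ∀ c : ℝ, 2 * c * (μ j - μ i) = κ j - κ i →
        μ i ≤ c → c ≤ μ j → c ^ 2 - 2 * μ i * c + κ i ≤ R) :
    ∃ a : ℝ, ∀ i, a ^ 2 - 2 * μ i * a + κ i ≤ R := by
  have h0K : 0 < K := by omega
  haveI : Nonempty (Fin K) := ⟨⟨0, h0K⟩⟩
  haveI : NeZero K := ⟨by omega⟩
  set i0 : Fin K := ⟨0, h0K⟩ with hi0
  set iL : Fin K := ⟨K - 1, by omega⟩ with hiL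
  set h : Fin K → ℝ → ℝ := fun i a => a ^ 2 - 2 * μ i * a + κ i with hdef
  have hcont : ∀ i : Fin K, Continuous (h i) := by
    intro i; simp only [hdef]; continuity
  set M : ℝ → ℝ := fun a => univ.sup' univ_nonempty (fun i => h i a) with Mdef
  have hMcont : Continuous M := Continuous.finset_sup'_apply univ_nonempty fun i _ => hcont i
  have hμ0L : μ i0 ≤ μ iL := hmono (by simp [hi0, hiL, Fin.le_def])
  obtain ⟨a, haIcc, hamin⟩ := isCompact_Icc.exists_isMinOn (Set.nonempty_Icc.2 hμ0L)
    hMcont.continuousOn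
  have hle : ∀ i, h i a ≤ M a := fun i => Finset.le_sup' (fun j => h j a) (mem_univ i)
  suffices hMR : M a ≤ R by exact ⟨a, fun i => (hle i).trans hMR⟩
  by_cases hcase1 : ∃ i, h i a = M a ∧ μ i = a
  · obtain ⟨i, hiact, hia⟩ := hcase1
    have : h i a = κ i - μ i ^ 2 := by rw [← hia]; simp only [hdef]; ring
    rw [← hiact, this]; exact hA i
  push_neg at hcase1
  by_cases hleft : ∃ i, h i a = M a ∧ μ i < a
  · by_cases hright : ∃ j, h j a = M a ∧ a < μ j
    · obtain ⟨i, hiact, hia⟩ := hleft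
      obtain ⟨j, hjact, hja⟩ := hright
      have hμij : μ i < μ j := hia.trans hja
      have hij : i < j := by
        by_contra hc
        exact absurd (hmono (not_lt.1 hc)) (not_le.2 hμij)
      have hcross : 2 * a * (μ j - μ i) = κ j - κ i := by
        have := hiact.trans hjact.symm
        simp only [hdef] at this
        linarith
      rw [← hiact]
      exact hB i j hij hμij a hcross hia.le hja.le
    · push_neg at hright
      exfalso
      obtain ⟨i₁, hi₁act, hi₁a⟩ := hleft
      have ha0 : μ i0 < a := lt_of_le_of_lt (hmono (Fin.zero_le _)) hi₁a
      have hev : ∀ i : Fin K, ∀ᶠ b in 𝓝[<] a, h i b < M a := by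
        intro i
        rcases lt_or_eq_of_le (hle i) with hlt | heq
        · exact ((hcont i).tendsto a).eventually_lt_const hlt |>.filter_mono nhdsWithin_le_nhds
        · have hμi : μ i < a :=
            lt_of_le_of_ne (hright i heq) (hcase1 i heq)
          filter_upwards [Ioo_mem_nhdsLT hμi] with b hb
          have : h i b < h i a := by
            simp only [hdef]
            nlinarith [mul_pos (sub_pos.2 hb.2) (by linarith [hb.1] : (0:ℝ) < a + b - 2 * μ i)]
          rw [heq] at this; exact this
      have hall : ∀ᶠ b in 𝓝[<] a, ∀ i, h i b < M a := eventually_all.2 hev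
      obtain ⟨b, hb1, hb2⟩ := (hall.and (Ioo_mem_nhdsLT ha0 : _ ∈ 𝓝[<] a)).exists
      have hbIcc : b ∈ Icc (μ i0) (μ iL) := ⟨hb2.1.le, hb2.2.le.trans haIcc.2⟩
      have hMb : M b < M a := (Finset.sup'_lt_iff _).2 fun i _ => hb1 i
      exact absurd (hamin hbIcc) (not_le.2 hMb)
  · push_neg at hleft
    exfalso
    obtain ⟨i₁, _, hi₁act⟩ := Finset.exists_mem_eq_sup' univ_nonempty (fun i => h i a)
    have hi₁gt : a < μ i₁ :=
      lt_of_le_of_ne (hleft i₁ hi₁act.symm) (Ne.symm (hcase1 i₁ hi₁act.symm))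
    have haL : a < μ iL := lt_of_lt_of_le hi₁gt (hmono (by
      simp only [hiL, Fin.le_def]; omega))
    have hev : ∀ i : Fin K, ∀ᶠ b in 𝓝[>] a, h i b < M a := by
      intro i
      rcases lt_or_eq_of_le (hle i) with hlt | heq
      · exact ((hcont i).tendsto a).eventually_lt_const hlt |>.filter_mono nhdsWithin_le_nhds
      · have hμi : a < μ i :=
          lt_of_le_of_ne (hleft i heq) (Ne.symm (hcase1 i heq))
        filter_upwards [Ioo_mem_nhdsGT hμi] with b hb
        have : h i b < h i a := by
          simp only [hdef]
          nlinarith [mul_pos (sub_pos.2 hb.1) (by linarith [hb.2] : (0:ℝ) < 2 * μ i - a - b)]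
        rw [heq] at this; exact this
    have hall : ∀ᶠ b in 𝓝[>] a, ∀ i, h i b < M a := eventually_all.2 hev
    obtain ⟨b, hb1, hb2⟩ := (hall.and (Ioo_mem_nhdsGT haL : _ ∈ 𝓝[>] a)).exists
    have hbIcc : b ∈ Icc (μ i0) (μ iL) := ⟨haIcc.1.trans hb2.1.le, hb2.2.le⟩
    have hMb : M b < M a := (Finset.sup'_lt_iff _).2 fun i _ => hb1 i
    exact absurd (hamin hbIcc) (not_le.2 hMb)

/-- Exact solution of the quadratic program on the simplex: for sorted `μ_1 ≤ ⋯ ≤ μ_K` and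
arbitrary `κ`, `max_{λ ∈ Δ^K}(λᵀκ - (λᵀμ)²)` equals the maximum of the values `κ_i - μ_i²`
and the pairwise values `h_{ij}(μ_{ij})`. -/
theorem upper_variance_stmt12
    {K : ℕ} (hK : 2 ≤ K) (μ κ : Fin K → ℝ) (hmono : Monotone μ) :
    (⨆ l : {l : Fin K → ℝ // (∀ i, 0 ≤ l i) ∧ ∑ i, l i = 1},
        ((∑ i, l.1 i * κ i) - (∑ i, l.1 i * μ i) ^ 2))
      = max (⨆ i, (κ i - μ i ^ 2))
          ((Finset.univ.filter fun p : Fin K × Fin K => p.1 < p.2).sup'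
            ⟨(⟨0, by omega⟩, ⟨1, by omega⟩), by
              exact Finset.mem_filter.mpr ⟨Finset.mem_univ _, Fin.mk_lt_mk.mpr (by omega)⟩⟩
            (fun p =>
              (fun x : ℝ => x ^ 2 - 2 * μ p.1 * x + κ p.1)
                (if μ p.1 < μ p.2 then
                  min (max (μ p.1) ((κ p.2 - κ p.1) / (2 * (μ p.2 - μ p.1)))) (μ p.2)
                 else μ p.1))) := by
  have h0K : 0 < K := by omega
  haveI : Nonempty (Fin K) := ⟨⟨0, h0K⟩⟩
  -- the simplex elements
  have hsingle_mem : ∀ i : Fin K,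
      (∀ k, 0 ≤ (fun k => if k = i then (1:ℝ) else 0) k) ∧
        (∑ k, (if k = i then (1:ℝ) else 0)) = 1 := by
    intro i
    constructor
    · intro k; dsimp only; split_ifs <;> norm_num
    · simpa using uv_sum_single i (fun _ => (1:ℝ))
  haveI : Nonempty {l : Fin K → ℝ // (∀ i, 0 ≤ l i) ∧ ∑ i, l i = 1} :=
    ⟨⟨_, hsingle_mem ⟨0, h0K⟩⟩⟩
  -- boundedness of the objective
  have hbdd : BddAbove (Set.range fun l : {l : Fin K → ℝ // (∀ i, 0 ≤ l i) ∧ ∑ i, l i = 1} =>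
      ((∑ i, l.1 i * κ i) - (∑ i, l.1 i * μ i) ^ 2)) := by
    refine ⟨univ.sup' univ_nonempty κ, ?_⟩
    rintro x ⟨⟨l, hpos, hsum⟩, rfl⟩
    have h1 : ∑ i, l i * κ i ≤ ∑ i, l i * univ.sup' univ_nonempty κ :=
      Finset.sum_le_sum fun i _ =>
        mul_le_mul_of_nonneg_left (Finset.le_sup' κ (mem_univ i)) (hpos i)
    rw [← Finset.sum_mul, hsum, one_mul] at h1
    have := sq_nonneg (∑ i, l i * μ i)
    dsimp only
    linarith
  have hsingle_le : ∀ i : Fin K, κ i - μ i ^ 2 ≤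
      ⨆ l : {l : Fin K → ℝ // (∀ i, 0 ≤ l i) ∧ ∑ i, l i = 1},
        ((∑ i, l.1 i * κ i) - (∑ i, l.1 i * μ i) ^ 2) := by
    intro i
    have := le_ciSup hbdd ⟨_, hsingle_mem i⟩
    rwa [uv_sum_single, uv_sum_single] at this
  have hpair_le : ∀ i j : Fin K, i ≠ j → ∀ t : ℝ, 0 ≤ t → t ≤ 1 →
      t * κ i + (1 - t) * κ j - (t * μ i + (1 - t) * μ j) ^ 2 ≤
      ⨆ l : {l : Fin K → ℝ // (∀ i, 0 ≤ l i) ∧ ∑ i, l i = 1},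
        ((∑ i, l.1 i * κ i) - (∑ i, l.1 i * μ i) ^ 2) := by
    intro i j hij t ht0 ht1
    have hmem : (∀ k, 0 ≤ ((if k = i then t else 0) + (if k = j then 1 - t else 0))) ∧
        (∑ k, ((if (k : Fin K) = i then t else 0) + (if k = j then 1 - t else 0))) = 1 := by
      constructor
      · intro k; split_ifs <;> linarith
      · have := uv_sum_pair hij t (fun _ => (1:ℝ))
        simpa using this
    have := le_ciSup hbdd ⟨_, hmem⟩
    rwa [uv_sum_pair hij, uv_sum_pair hij] at this
  apply le_antisymm
  · -- hard direction
    have hA : ∀ i, κ i - μ i ^ 2 ≤ max (⨆ i, (κ i - μ i ^ 2))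
        ((Finset.univ.filter fun p : Fin K × Fin K => p.1 < p.2).sup'
            ⟨(⟨0, by omega⟩, ⟨1, by omega⟩), by
              exact Finset.mem_filter.mpr ⟨Finset.mem_univ _, Fin.mk_lt_mk.mpr (by omega)⟩⟩
            (fun p =>
              (fun x : ℝ => x ^ 2 - 2 * μ p.1 * x + κ p.1)
                (if μ p.1 < μ p.2 then
                  min (max (μ p.1) ((κ p.2 - κ p.1) / (2 * (μ p.2 - μ p.1)))) (μ p.2)
                 else μ p.1))) := fun i =>
      le_trans (le_ciSup (f := fun i => κ i - μ i ^ 2) (Set.Finite.bddAbove (Set.finite_range _)) i) (le_max_left _ _)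
    have hB : ∀ i j : Fin K, i < j → μ i < μ j → ∀ c : ℝ,
        2 * c * (μ j - μ i) = κ j - κ i → μ i ≤ c → c ≤ μ j →
        c ^ 2 - 2 * μ i * c + κ i ≤ max (⨆ i, (κ i - μ i ^ 2))
          ((Finset.univ.filter fun p : Fin K × Fin K => p.1 < p.2).sup'
            ⟨(⟨0, by omega⟩, ⟨1, by omega⟩), by
              exact Finset.mem_filter.mpr ⟨Finset.mem_univ _, Fin.mk_lt_mk.mpr (by omega)⟩⟩
            (fun p =>
              (fun x : ℝ => x ^ 2 - 2 * μ p.1 * x + κ p.1)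
                (if μ p.1 < μ p.2 then
                  min (max (μ p.1) ((κ p.2 - κ p.1) / (2 * (μ p.2 - μ p.1)))) (μ p.2)
                 else μ p.1))) := by
      intro i j hij hμij c hc hci hcj
      have hd : (0:ℝ) < 2 * (μ j - μ i) := by linarith
      have hceq : (κ j - κ i) / (2 * (μ j - μ i)) = c := by
        rw [div_eq_iff (ne_of_gt hd)]; linarith
      have hp : (i, j) ∈ Finset.univ.filter fun p : Fin K × Fin K => p.1 < p.2 :=
        Finset.mem_filter.mpr ⟨Finset.mem_univ _, hij⟩
      refine le_trans ?_ (le_max_right _ _)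
      have := Finset.le_sup'
        (f := fun p : Fin K × Fin K =>
          (fun x : ℝ => x ^ 2 - 2 * μ p.1 * x + κ p.1)
            (if μ p.1 < μ p.2 then
              min (max (μ p.1) ((κ p.2 - κ p.1) / (2 * (μ p.2 - μ p.1)))) (μ p.2)
             else μ p.1)) hp
      simpa only [if_pos hμij, hceq, max_eq_right hci, min_eq_left hcj] using this
    obtain ⟨a, ha⟩ := uv_key hK μ κ hmono _ hA hB
    apply ciSup_le
    rintro ⟨l, hpos, hsum⟩
    have hexp : ∑ i, l i * (a ^ 2 - 2 * μ i * a + κ i)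
        = a ^ 2 - 2 * a * (∑ i, l i * μ i) + ∑ i, l i * κ i := by
      rw [Finset.sum_congr rfl (fun i _ => by
        show l i * (a ^ 2 - 2 * μ i * a + κ i)
          = a ^ 2 * l i - 2 * a * (l i * μ i) + l i * κ i
        ring)]
      rw [Finset.sum_add_distrib, Finset.sum_sub_distrib, ← Finset.mul_sum, ← Finset.mul_sum,
        hsum, mul_one]
    have h1 : (∑ i, l i * κ i) - (∑ i, l i * μ i) ^ 2
        ≤ ∑ i, l i * (a ^ 2 - 2 * μ i * a + κ i) := by
      rw [hexp]
      nlinarith [sq_nonneg (a - ∑ i, l i * μ i)]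
    have h2 : ∑ i, l i * (a ^ 2 - 2 * μ i * a + κ i) ≤ ∑ i, l i * _ :=
      Finset.sum_le_sum fun i _ => mul_le_mul_of_nonneg_left (ha i) (hpos i)
    rw [← Finset.sum_mul, hsum, one_mul] at h2
    exact le_trans h1 h2
  · -- easy direction
    apply max_le
    · exact ciSup_le hsingle_le
    · apply Finset.sup'_le
      rintro ⟨i, j⟩ hp
      have hij : i < j := (Finset.mem_filter.1 hp).2
      dsimp only
      by_cases hμ : μ i < μ j
      · rw [if_pos hμ]
        have hd : (0:ℝ) < 2 * (μ j - μ i) := by linarith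
        set c0 := (κ j - κ i) / (2 * (μ j - μ i)) with hc0
        have hcross : 2 * c0 * (μ j - μ i) = κ j - κ i := by
          rw [hc0]; linear_combination div_mul_cancel₀ (κ j - κ i) hd.ne'
        rcases le_or_gt c0 (μ i) with hle1 | hgt1
        · rw [max_eq_left hle1, min_eq_left hμ.le]
          have : μ i ^ 2 - 2 * μ i * μ i + κ i = κ i - μ i ^ 2 := by ring
          rw [this]; exact hsingle_le i
        · rcases le_or_gt (μ j) c0 with hle2 | hlt2
          · rw [max_eq_right hgt1.le, min_eq_right hle2]
            refine le_trans ?_ (hsingle_le j)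
            nlinarith
          · rw [max_eq_right hgt1.le, min_eq_left hlt2.le]
            set t := (μ j - c0) / (μ j - μ i) with ht
            have hdd : (0:ℝ) < μ j - μ i := by linarith
            have ht0 : 0 ≤ t := by
              rw [ht]; apply div_nonneg <;> linarith
            have ht1 : t ≤ 1 := by
              rw [ht, div_le_one hdd]; linarith
            have hmean : t * μ i + (1 - t) * μ j = c0 := by
              rw [ht]; field_simp; ring
            have hval : t * κ i + (1 - t) * κ j = c0 ^ 2 - 2 * μ i * c0 + κ i + c0 ^ 2 := by
              rw [ht]; field_simp
              nlinarith [hcross]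
            have := hpair_le i j (ne_of_lt hij) t ht0 ht1
            rw [hmean, hval] at this
            linarith
      · rw [if_neg hμ]
        have : μ i ^ 2 - 2 * μ i * μ i + κ i = κ i - μ i ^ 2 := by ring
        rw [this]; exact hsingle_le i
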